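/- If G is a graph on n vertices with no copy of C_{2k+1} (k ≥ 2 fixed), then the number of triangles in G is at most (2(k-1)/3)·|E(G)|. -/

import Mathlib

open Finset List

namespace EGaux
set_option linter.unusedSectionVars false

variable {n : ℕ} (G : SimpleGraph (Fin n)) [DecidableRel G.Adj]

def degIn (s : Finset (Fin n)) (v : Fin n) : ℕ := (s.filter (G.Adj v)).card

def Dsum (s : Finset (Fin n)) : ℕ := ∑ v ∈ s, degIn G s v

def IsPathIn (s : Finset (Fin n)) (l : List (Fin n)) : Prop :=
  l.IsChain G.Adj ∧ l.Nodup ∧ ∀ x ∈ l, x ∈ s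

variable {G}

lemma IsPathIn.mono {s t : Finset (Fin n)} {l} (hst : s ⊆ t) (h : IsPathIn G s l) :
    IsPathIn G t l := ⟨h.1, h.2.1, fun x hx => hst (h.2.2 x hx)⟩

lemma flip_adj : flip G.Adj = G.Adj := by
  ext a b; exact ⟨fun h => h.symm, fun h => h.symm⟩

lemma IsPathIn.reverse {s : Finset (Fin n)} {l} (h : IsPathIn G s l) :
    IsPathIn G s l.reverse := by
  refine ⟨?_, List.nodup_reverse.2 h.2.1, fun x hx => h.2.2 x (by simpa using hx)⟩
  rw [List.isChain_reverse]; exact h.1.imp fun _ _ h => h.symm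

lemma degIn_le {s : Finset (Fin n)} {v : Fin n} (hv : v ∈ s) :
    degIn G s v ≤ s.card - 1 := by
  have : s.filter (G.Adj v) ⊆ s.erase v := by
    intro u hu
    rw [Finset.mem_filter] at hu
    exact Finset.mem_erase.2 ⟨fun h => G.irrefl (h ▸ hu.2), hu.1⟩
  calc degIn G s v ≤ (s.erase v).card := Finset.card_le_card this
    _ = s.card - 1 := Finset.card_erase_of_mem hv

lemma Dsum_erase {s : Finset (Fin n)} {v : Fin n} (hv : v ∈ s) :
    Dsum G s = Dsum G (s.erase v) + 2 * degIn G s v := by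
  classical
  have h1 : Dsum G s = degIn G s v + ∑ u ∈ s.erase v, degIn G s u := by
    rw [Dsum, ← Finset.add_sum_erase _ _ hv]
  have h2 : ∀ u ∈ s.erase v, degIn G s u
      = degIn G (s.erase v) u + (if G.Adj u v then 1 else 0) := by
    intro u hu
    rw [degIn, degIn]
    by_cases h : G.Adj u v
    · rw [if_pos h]
      have : s.filter (G.Adj u) = insert v ((s.erase v).filter (G.Adj u)) := by
        ext w
        simp only [Finset.mem_filter, Finset.mem_insert, Finset.mem_erase]
        constructor
        · rintro ⟨hw, haw⟩
          by_cases hwv : w = v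
          · exact Or.inl hwv
          · exact Or.inr ⟨⟨hwv, hw⟩, haw⟩
        · rintro (rfl | ⟨⟨_, hw⟩, haw⟩)
          · exact ⟨hv, h⟩
          · exact ⟨hw, haw⟩
      rw [this, Finset.card_insert_of_notMem (by simp)]
    · rw [if_neg h]
      congr 1
      ext w
      simp only [Finset.mem_filter, Finset.mem_erase]
      constructor
      · rintro ⟨hw, haw⟩
        exact ⟨⟨fun hwv => h (hwv ▸ haw), hw⟩, haw⟩
      · rintro ⟨⟨_, hw⟩, haw⟩; exact ⟨hw, haw⟩
  rw [h1, Finset.sum_congr rfl h2, Finset.sum_add_distrib]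
  have h3 : ∑ u ∈ s.erase v, (if G.Adj u v then 1 else 0) = degIn G s v := by
    rw [← Finset.card_filter]
    rw [degIn]
    congr 1
    ext u
    simp only [Finset.mem_filter, Finset.mem_erase]
    constructor
    · rintro ⟨⟨_, hu⟩, ha⟩; exact ⟨hu, ha.symm⟩
    · rintro ⟨hu, ha⟩; exact ⟨⟨fun h => G.irrefl (h ▸ ha), hu⟩, ha.symm⟩
  rw [h3, Dsum]
  omega

lemma degIn_congr {s a : Finset (Fin n)} {v : Fin n} (has : a ⊆ s) (hv : v ∈ a)
    (hcl : ∀ w ∈ s, G.Adj v w → w ∈ a) : degIn G s v = degIn G a v := by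
  rw [degIn, degIn]
  congr 1
  ext u
  simp only [Finset.mem_filter]
  exact ⟨fun ⟨hu, ha⟩ => ⟨hcl u hu ha, ha⟩, fun ⟨hu, ha⟩ => ⟨has hu, ha⟩⟩

lemma Dsum_split {s a : Finset (Fin n)} (has : a ⊆ s)
    (hcross : ∀ u ∈ a, ∀ w ∈ s, G.Adj u w → w ∈ a) :
    Dsum G s = Dsum G a + Dsum G (s \ a) := by
  classical
  rw [Dsum, ← Finset.sum_sdiff has, add_comm]
  congr 1
  · exact Finset.sum_congr rfl fun v hv => degIn_congr has hv (hcross v hv)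
  · refine Finset.sum_congr rfl fun v hv => ?_
    refine degIn_congr Finset.sdiff_subset hv ?_
    intro w hw haw
    rw [Finset.mem_sdiff] at hv ⊢
    refine ⟨hw, fun hwa => hv.2 (hcross w hwa v hv.1 haw.symm)⟩

lemma Dsum_le_card {m : ℕ} {s : Finset (Fin n)} (hs : s.card ≤ m + 1) :
    Dsum G s ≤ m * s.card := by
  calc Dsum G s ≤ ∑ _v ∈ s, m := Finset.sum_le_sum fun v hv => by
        have := degIn_le (G := G) hv; omega
    _ = m * s.card := by rw [Finset.sum_const, smul_eq_mul, mul_comm]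

def restrict (G : SimpleGraph (Fin n)) (s : Finset (Fin n)) : SimpleGraph (Fin n) where
  Adj a b := G.Adj a b ∧ a ∈ s ∧ b ∈ s
  symm := ⟨fun a b ⟨h, ha, hb⟩ => ⟨h.symm, hb, ha⟩⟩
  loopless := ⟨fun a ⟨h, _⟩ => G.loopless.irrefl a h⟩

lemma restrict_adj {s : Finset (Fin n)} {a b : Fin n} :
    (restrict G s).Adj a b ↔ G.Adj a b ∧ a ∈ s ∧ b ∈ s := Iff.rfl

lemma reach_transfer {s S : Finset (Fin n)}
    (hclosed : ∀ u ∈ S, ∀ w ∈ s, G.Adj u w → w ∈ S) :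
    ∀ {u v : Fin n}, (restrict G s).Walk u v → u ∈ S → (restrict G S).Reachable u v := by
  intro u v p
  induction p with
  | nil => exact fun hu => SimpleGraph.Reachable.refl _
  | cons h p ih =>
    intro hu
    rw [restrict_adj] at h
    obtain ⟨hadj, _, hw⟩ := h
    have hwS := hclosed _ hu _ hw hadj
    exact (SimpleGraph.Adj.reachable (restrict_adj.2 ⟨hadj, hu, hwS⟩)).trans (ih hwS)

lemma exit_edge {S : Finset (Fin n)} {L : List (Fin n)} :
    ∀ {u v : Fin n}, (restrict G S).Walk u v → u ∉ L → v ∈ L →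
      ∃ x y, (restrict G S).Adj x y ∧ x ∉ L ∧ y ∈ L := by
  intro u v p
  induction p with
  | nil => exact fun hu hv => absurd hv hu
  | @cons a b c h p ih =>
    intro hu hv
    by_cases hb : b ∈ L
    · exact ⟨a, b, h, hu, hb⟩
    · exact ih hb hv

lemma chain'_rot {α : Type*} {R : α → α → Prop} {c₁ c₂ : List α}
    (h : List.IsChain R (c₁ ++ c₂))
    (hw : ∀ x ∈ (c₁ ++ c₂).getLast?, ∀ y ∈ (c₁ ++ c₂).head?, R x y) :
    List.IsChain R (c₂ ++ c₁) ∧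
      ∀ x ∈ (c₂ ++ c₁).getLast?, ∀ y ∈ (c₂ ++ c₁).head?, R x y := by
  rcases eq_or_ne c₁ [] with rfl | h1
  · simp only [List.nil_append] at h hw
    simp only [List.append_nil]
    exact ⟨h, hw⟩
  rcases eq_or_ne c₂ [] with rfl | h2
  · simp only [List.append_nil] at h hw
    simp only [List.nil_append]
    exact ⟨h, hw⟩
  rw [List.isChain_append] at h
  obtain ⟨hc1, hc2, hlink⟩ := h
  constructor
  · rw [List.isChain_append]
    refine ⟨hc2, hc1, ?_⟩
    intro x hx y hy
    refine hw x ?_ y ?_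
    · rw [List.getLast?_append_of_ne_nil _ h2]; exact hx
    · rw [List.head?_append_of_ne_nil _ h1]; exact hy
  · intro x hx y hy
    rw [List.getLast?_append_of_ne_nil _ h1] at hx
    rw [List.head?_append_of_ne_nil _ h2] at hy
    exact hlink x hx y hy

section getD
variable {α : Type*} {l : List α} {d : α}

omit [DecidableRel G.Adj]

lemma getD_eq_get' {i : ℕ} (h : i < l.length) : l.getD i d = l.get ⟨i, h⟩ := List.getD_eq_get l d ⟨i, h⟩

lemma getD_mem {i : ℕ} (h : i < l.length) : l.getD i d ∈ l := by
  rw [getD_eq_get' h]; exact l.get_mem _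

lemma getD_head (h : l ≠ []) : l.getD 0 d = l.head h := by
  rw [getD_eq_get' (by simpa using List.length_pos_iff.2 h)]
  exact List.get_mk_zero _

lemma getD_getLast (h : l ≠ []) : l.getD (l.length - 1) d = l.getLast h := by
  have hlp : 0 < l.length := List.length_pos_iff.2 h
  rw [getD_eq_get' (by omega), List.getLast_eq_getElem]; rfl

lemma getD_inj {i j : ℕ} (hnd : l.Nodup) (hi : i < l.length) (hj : j < l.length)
    (h : l.getD i d = l.getD j d) : i = j := by
  rw [getD_eq_get' hi, getD_eq_get' hj] at h
  have := List.nodup_iff_injective_get.1 hnd h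
  exact congrArg Fin.val this

lemma chain'_getD {R : α → α → Prop} {i : ℕ} (hch : l.IsChain R) (h : i + 1 < l.length) :
    R (l.getD i d) (l.getD (i+1) d) := by
  rw [getD_eq_get' (by omega), getD_eq_get' h]
  exact List.isChain_iff_getElem.1 hch i (by omega)

lemma getD_indexOf [DecidableEq α] {w : α} (h : w ∈ l) : l.getD (List.idxOf w l) d = w := by
  have hlt := List.idxOf_lt_length_iff.2 h
  rw [getD_eq_get' hlt]
  exact List.idxOf_get hlt

lemma getD_take {j i : ℕ} (h : i < j) (hi : i < l.length) :
    (l.take j).getD i d = l.getD i d := by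
  have h1 : i < (l.take j).length := by rw [List.length_take]; omega
  rw [getD_eq_get' h1, getD_eq_get' hi, List.get_eq_getElem, List.get_eq_getElem,
    List.getElem_take]

lemma getD_drop {j i : ℕ} (h : j + i < l.length) :
    (l.drop j).getD i d = l.getD (j + i) d := by
  have h1 : i < (l.drop j).length := by rw [List.length_drop]; omega
  rw [getD_eq_get' h1, getD_eq_get' h, List.get_eq_getElem, List.get_eq_getElem,
    List.getElem_drop]

lemma getLast_eq_getD (h : l ≠ []) : l.getLast h = l.getD (l.length - 1) d :=
  (getD_getLast h).symm

lemma head_eq_getD (h : l ≠ []) : l.head h = l.getD 0 d := (getD_head h).symm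

end getD

lemma cycle_hom {N : ℕ} (hN : 3 ≤ N) {l : List (Fin n)} (hne : l ≠ [])
    (hlen : l.length = N) (hch : l.IsChain G.Adj) (hnd : l.Nodup)
    (hwrap : G.Adj (l.getLast hne) (l.head hne)) :
    ∃ f : SimpleGraph.cycleGraph N →g G, Function.Injective ⇑f := by
  obtain ⟨M, rfl⟩ : ∃ M, N = M + 3 := ⟨N - 3, by omega⟩
  set d := l.head hne with hd
  let f : Fin (M + 3) → Fin n := fun i => l.getD i.val d
  have hbound : ∀ i : Fin (M + 3), i.val < l.length := fun i => by rw [hlen]; exact i.isLt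
  have hadj : ∀ v : Fin (M + 3), G.Adj (f (v + 1)) (f v) := by
    intro v
    have hv1 : ((v + 1 : Fin (M + 3))).val = if v = Fin.last (M + 2) then 0 else v.val + 1 :=
      Fin.val_add_one v
    by_cases hv : v = Fin.last (M + 2)
    · rw [if_pos hv] at hv1
      have h1 : f (v + 1) = l.head hne := by
        show l.getD _ d = _
        rw [hv1, getD_head hne]
      have h2 : f v = l.getLast hne := by
        show l.getD _ d = _
        have : v.val = l.length - 1 := by rw [hlen, hv]; simp [Fin.last]
        rw [this, getD_getLast hne]
      rw [h1, h2]
      exact hwrap.symm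
    · rw [if_neg hv] at hv1
      have hvlt : v.val + 1 < l.length := by
        rw [hlen]
        have := hbound v
        rw [hlen] at this
        rcases Nat.lt_or_ge (v.val + 1) (M + 3) with h | h
        · exact h
        · exfalso; exact hv (Fin.ext (by omega : v.val = M + 2))
      have : f (v + 1) = l.getD (v.val + 1) d := by show l.getD _ d = _; rw [hv1]
      rw [this]
      exact (chain'_getD hch hvlt).symm
  refine ⟨⟨f, ?_⟩, ?_⟩
  · intro u v huv
    rw [SimpleGraph.cycleGraph_adj'] at huv
    have hone : ((1 : Fin (M + 3))).val = 1 := rfl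
    rcases huv with h | h
    · have : u = v + 1 := by
        have h' : u - v = 1 := Fin.ext (by rw [hone]; exact h)
        rw [sub_eq_iff_eq_add'] at h'; exact h'
      rw [this]; exact hadj v
    · have : v = u + 1 := by
        have h' : v - u = 1 := Fin.ext (by rw [hone]; exact h)
        rw [sub_eq_iff_eq_add'] at h'; exact h'
      rw [this]; exact (hadj u).symm
  · intro u v huv
    exact Fin.ext (getD_inj hnd (hbound u) (hbound v) huv)

lemma no_big_component {m : ℕ} (hm : 1 ≤ m) {S : Finset (Fin n)} {v₀ : Fin n}
    (hv₀ : v₀ ∈ S)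
    (hpathS : ∀ l, IsPathIn G S l → l.length ≤ m)
    (hconn : ∀ u ∈ S, (restrict G S).Reachable v₀ u)
    (hdeg : ∀ v ∈ S, m ≤ 2 * degIn G S v) :
    S.card ≤ m := by
  classical
  by_contra hbig
  push_neg at hbig
  set P : ℕ → Prop := fun j => ∃ l : List (Fin n), IsPathIn G S l ∧ l.length = j with hP
  have hP1 : P 1 := ⟨[v₀], ⟨List.isChain_singleton _, List.nodup_singleton _,
    by intro x hx; rw [List.mem_singleton] at hx; rw [hx]; exact hv₀⟩, rfl⟩
  set t := Nat.findGreatest P m with htdef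
  have ht : P t := Nat.findGreatest_spec hm hP1
  have h1t : 1 ≤ t := Nat.le_findGreatest hm hP1
  have hmax : ∀ l, IsPathIn G S l → l.length ≤ t := by
    intro l hl
    by_contra hlen
    push_neg at hlen
    exact Nat.findGreatest_is_greatest hlen (hpathS l hl) ⟨l, hl, rfl⟩
  obtain ⟨l, hl, hlt⟩ := ht
  have htm : t ≤ m := hlt ▸ hpathS l hl
  have hne : l ≠ [] := by
    intro h; rw [h] at hlt; simp at hlt; omega
  -- maximal paths: neighbors of the head lie on the path
  have hnbr : ∀ (l' : List (Fin n)), IsPathIn G S l' → (h : l' ≠ []) → l'.length = t →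
      ∀ w ∈ S, G.Adj (l'.head h) w → w ∈ l' := by
    intro l' hl' h hlen' w hw hadj
    by_contra hwl
    have hnew : IsPathIn G S (w :: l') := by
      refine ⟨List.isChain_cons.2 ⟨?_, hl'.1⟩, List.nodup_cons.2 ⟨hwl, hl'.2.1⟩, ?_⟩
      · intro y hy
        rw [List.head?_eq_head h, Option.mem_some_iff] at hy
        rw [← hy]
        exact hadj.symm
      · intro x hx
        rcases List.mem_cons.1 hx with rfl | hx
        · exact hw
        · exact hl'.2.2 x hx
    have := hmax _ hnew
    simp only [List.length_cons, hlen'] at this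
    omega
  set v0 := l.head hne with hv0
  set vL := l.getLast hne with hvL
  have hv0S : v0 ∈ S := hl.2.2 _ (List.head_mem hne)
  have hvLS : vL ∈ S := hl.2.2 _ (List.getLast_mem hne)
  have hA : ∀ w ∈ S, G.Adj v0 w → w ∈ l := fun w hw hadj => hnbr l hl hne hlt w hw hadj
  have hB : ∀ w ∈ S, G.Adj vL w → w ∈ l := by
    intro w hw hadj
    have hrne : l.reverse ≠ [] := by simpa using hne
    have hhead : l.reverse.head hrne = vL := by
      have h1 := List.head?_eq_head hrne
      rw [List.head?_reverse, List.getLast?_eq_getLast hne, Option.some_inj] at h1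
      exact h1.symm
    have := hnbr l.reverse hl.reverse hrne (by simpa using hlt) w hw (by rwa [hhead])
    exact List.mem_reverse.1 this
  -- pigeonhole to find the rotation index
  set A := (Finset.range (t-1)).filter (fun i => G.Adj v0 (l.getD (i+1) v0)) with hAdef
  set B := (Finset.range (t-1)).filter (fun i => G.Adj vL (l.getD i v0)) with hBdef
  have hidx_facts : ∀ w ∈ S, G.Adj v0 w → List.idxOf w l < t ∧ List.idxOf w l ≠ 0 ∧
      l.getD (List.idxOf w l) v0 = w := by
    intro w hw hadj
    have hwl : w ∈ l := hA w hw hadj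
    have hidx : List.idxOf w l < t := hlt ▸ List.idxOf_lt_length_iff.2 hwl
    have hgd : l.getD (List.idxOf w l) v0 = w := getD_indexOf hwl
    refine ⟨hidx, ?_, hgd⟩
    intro h0
    rw [h0, getD_head hne] at hgd
    have hw0 : v0 = w := by rw [hv0]; exact hgd
    exact G.ne_of_adj hadj hw0
  have hcardA : degIn G S v0 ≤ A.card := by
    apply Finset.card_le_card_of_injOn (fun w => List.idxOf w l - 1)
    · intro w hwf
      rw [Finset.mem_coe, Finset.mem_filter] at hwf
      obtain ⟨hidx, hidx0, hgd⟩ := hidx_facts w hwf.1 hwf.2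
      beta_reduce; rw [Finset.mem_coe, hAdef, Finset.mem_filter, Finset.mem_range]
      refine ⟨by omega, ?_⟩
      have : List.idxOf w l - 1 + 1 = List.idxOf w l := by omega
      rw [this, hgd]
      exact hwf.2
    · intro w1 h1 w2 h2 heq
      simp only [Finset.coe_filter, Set.mem_setOf_eq] at h1 h2
      obtain ⟨hi1, hn1, hg1⟩ := hidx_facts w1 h1.1 h1.2
      obtain ⟨hi2, hn2, hg2⟩ := hidx_facts w2 h2.1 h2.2
      have heq' : List.idxOf w1 l - 1 = List.idxOf w2 l - 1 := heq
      have : List.idxOf w1 l = List.idxOf w2 l := by omega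
      rw [← hg1, ← hg2, this]
  have hidx_factsB : ∀ w ∈ S, G.Adj vL w → List.idxOf w l < t ∧ List.idxOf w l ≠ t - 1 ∧
      l.getD (List.idxOf w l) v0 = w := by
    intro w hw hadj
    have hwl : w ∈ l := hB w hw hadj
    have hidx : List.idxOf w l < t := hlt ▸ List.idxOf_lt_length_iff.2 hwl
    have hgd : l.getD (List.idxOf w l) v0 = w := getD_indexOf hwl
    refine ⟨hidx, ?_, hgd⟩
    intro h0
    rw [h0, ← hlt, getD_getLast hne] at hgd
    have hw0 : vL = w := by rw [hvL]; exact hgd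
    exact G.ne_of_adj hadj hw0
  have hcardB : degIn G S vL ≤ B.card := by
    apply Finset.card_le_card_of_injOn (fun w => List.idxOf w l)
    · intro w hwf
      rw [Finset.mem_coe, Finset.mem_filter] at hwf
      obtain ⟨hidx, hidx0, hgd⟩ := hidx_factsB w hwf.1 hwf.2
      beta_reduce; rw [Finset.mem_coe, hBdef, Finset.mem_filter, Finset.mem_range]
      refine ⟨by omega, ?_⟩
      rw [hgd]
      exact hwf.2
    · intro w1 h1 w2 h2 heq
      simp only [Finset.coe_filter, Set.mem_setOf_eq] at h1 h2
      obtain ⟨hi1, hn1, hg1⟩ := hidx_factsB w1 h1.1 h1.2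
      obtain ⟨hi2, hn2, hg2⟩ := hidx_factsB w2 h2.1 h2.2
      have heq' : List.idxOf w1 l = List.idxOf w2 l := heq
      rw [← hg1, ← hg2, heq']
  have hABcard : t - 1 < A.card + B.card := by
    have h2A := hdeg _ hv0S
    have h2B := hdeg _ hvLS
    omega
  have hinter : (A ∩ B).Nonempty := by
    rw [Finset.nonempty_iff_ne_empty]
    intro hemp
    have hdisj : Disjoint A B := Finset.disjoint_iff_inter_eq_empty.2 hemp
    have hsub : A ∪ B ⊆ Finset.range (t-1) := by
      apply Finset.union_subset <;> exact Finset.filter_subset _ _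
    have := Finset.card_le_card hsub
    rw [Finset.card_range, Finset.card_union_of_disjoint hdisj] at this
    omega
  obtain ⟨i, hi⟩ := hinter
  rw [Finset.mem_inter, hAdef, hBdef, Finset.mem_filter, Finset.mem_filter,
    Finset.mem_range] at hi
  obtain ⟨⟨hit, hiA⟩, _, hiB⟩ := hi
  -- build the cycle c
  have hi1t : i + 1 < t := by omega
  set c := l.take (i+1) ++ (l.drop (i+1)).reverse with hcdef
  have hperm : c.Perm l := by
    calc c ~ l.take (i+1) ++ l.drop (i+1) := List.Perm.append_left _ (List.reverse_perm _)
      _ = l := List.take_append_drop _ _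
  have hcnd : c.Nodup := hperm.nodup_iff.2 hl.2.1
  have hclen : c.length = t := by rw [hperm.length_eq, hlt]
  have htake_ne : l.take (i+1) ≠ [] := by
    have h1 : (l.take (i+1)).length = i+1 := by rw [List.length_take]; rw [hlt] at *; omega
    intro h; rw [h] at h1; simp at h1
  have hdrop_ne : l.drop (i+1) ≠ [] := by
    have h1 : (l.drop (i+1)).length = t - (i+1) := by rw [List.length_drop, hlt]
    intro h; rw [h] at h1; simp at h1; omega
  have hdropr_ne : (l.drop (i+1)).reverse ≠ [] := by simpa using hdrop_ne
  have htake_last : (l.take (i+1)).getLast htake_ne = l.getD i v0 := by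
    rw [getLast_eq_getD (d := v0) htake_ne]
    have h1 : (l.take (i+1)).length = i+1 := by rw [List.length_take]; rw [hlt] at *; omega
    rw [h1]
    have : i + 1 - 1 = i := by omega
    rw [this, getD_take (by omega) (by omega : i < l.length)]
  have hdrop_last : (l.drop (i+1)).getLast hdrop_ne = vL := by
    rw [getLast_eq_getD (d := v0) hdrop_ne, List.length_drop, hlt,
      getD_drop (by rw [hlt]; omega), hvL, getLast_eq_getD (d := v0) hne, hlt]
    congr 1
    omega
  have hdrop_head : (l.drop (i+1)).head hdrop_ne = l.getD (i+1) v0 := by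
    rw [head_eq_getD (d := v0) hdrop_ne, getD_drop (by rw [hlt]; omega)]
  have hc_chain : List.IsChain G.Adj c := by
    rw [hcdef, List.isChain_append]
    refine ⟨hl.1.take _, ?_, ?_⟩
    · rw [List.isChain_reverse]
      exact (hl.1.drop _).imp fun _ _ h => h.symm
    · intro x hx y hy
      rw [List.getLast?_eq_getLast htake_ne, Option.mem_some_iff] at hx
      rw [List.head?_reverse, List.getLast?_eq_getLast hdrop_ne, Option.mem_some_iff] at hy
      rw [← hx, ← hy, htake_last, hdrop_last]
      exact hiB.symm
  have hc_wrap : ∀ x ∈ c.getLast?, ∀ y ∈ c.head?, G.Adj x y := by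
    intro x hx y hy
    rw [hcdef, List.getLast?_append_of_ne_nil _ hdropr_ne, List.getLast?_reverse,
      List.head?_eq_head hdrop_ne, Option.mem_some_iff] at hx
    rw [hcdef, List.head?_append_of_ne_nil _ htake_ne, List.head?_eq_head htake_ne,
      Option.mem_some_iff] at hy
    have hyv : y = v0 := by
      rw [← hy]
      have : (l.take (i+1)).head htake_ne = l.getD 0 v0 := by
        rw [head_eq_getD (d := v0) htake_ne, getD_take (by omega) (by rw [hlt]; omega)]
      rw [this, getD_head hne]
    rw [← hx, hdrop_head, hyv]
    exact hiA.symm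
  -- find a vertex outside the path
  have hlsub : l.toFinset ⊆ S := fun x hx => hl.2.2 x (List.mem_toFinset.1 hx)
  have hltf : l.toFinset.card = t := by rw [List.toFinset_card_of_nodup hl.2.1, hlt]
  have hnsub : ¬ S ⊆ l.toFinset := by
    intro hsub
    have := Finset.card_le_card hsub
    omega
  obtain ⟨u, huS, hul'⟩ := Finset.not_subset.1 hnsub
  have hul : u ∉ l := fun h => hul' (List.mem_toFinset.2 h)
  -- find an edge from outside into the path
  have hreach : (restrict G S).Reachable u v0 := ((hconn u huS).symm.trans (hconn _ hv0S))
  obtain ⟨p⟩ := hreach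
  obtain ⟨x, y, hxy, hxl, hyl⟩ := exit_edge p hul (List.head_mem hne)
  have hxS : x ∈ S := (restrict_adj.1 hxy).2.1
  have hGxy : G.Adj x y := (restrict_adj.1 hxy).1
  -- rotate the cycle to start at y
  have hyc : y ∈ c := hperm.mem_iff.2 hyl
  obtain ⟨c₁, c₂, hc12⟩ := List.append_of_mem hyc
  rw [hc12] at hc_chain hc_wrap
  obtain ⟨hrot, hrotw⟩ := chain'_rot hc_chain hc_wrap
  have hrperm : ((y :: c₂) ++ c₁).Perm l := ((List.perm_append_comm).trans (hc12 ▸ hperm))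
  have hpath_new : IsPathIn G S (x :: ((y :: c₂) ++ c₁)) := by
    refine ⟨List.isChain_cons.2 ⟨?_, hrot⟩, List.nodup_cons.2 ⟨?_, hrperm.nodup_iff.2 hl.2.1⟩, ?_⟩
    · intro z hz
      rw [List.cons_append, List.head?_cons, Option.mem_some_iff] at hz
      rw [← hz]
      exact hGxy
    · intro hxr
      exact hxl (hrperm.mem_iff.1 hxr)
    · intro z hz
      rcases List.mem_cons.1 hz with rfl | hz
      · exact hxS
      · exact hl.2.2 z (hrperm.mem_iff.1 hz)
  have hfin := hmax _ hpath_new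
  have : ((y :: c₂) ++ c₁).length = t := by rw [hrperm.length_eq, hlt]
  rw [List.length_cons, this] at hfin
  omega

lemma erdos_gallai {m : ℕ} (hm : 1 ≤ m) :
    ∀ s : Finset (Fin n), (∀ l, IsPathIn G s l → l.length ≤ m) →
      Dsum G s ≤ (m - 1) * s.card := by
  intro s
  induction s using Finset.strongInduction with
  | _ s ih =>
    intro hpath
    by_cases hA : ∃ v ∈ s, 2 * degIn G s v + 1 ≤ m
    · obtain ⟨v, hv, hdv⟩ := hA
      have hsub : s.erase v ⊂ s := Finset.erase_ssubset hv
      have hrec := ih (s.erase v) hsub fun l hl =>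
        hpath l (hl.mono (Finset.erase_subset _ _))
      have hmono : Dsum G (s.erase v) ≤ (m - 1) * (s.card - 1) := by
        rwa [Finset.card_erase_of_mem hv] at hrec
      have hcard : 1 ≤ s.card := Finset.card_pos.2 ⟨v, hv⟩
      have := Dsum_erase (G := G) hv
      have harith : (m - 1) * (s.card - 1) + (m - 1) = (m - 1) * s.card := by
        have h1 : s.card = (s.card - 1) + 1 := by omega
        calc (m - 1) * (s.card - 1) + (m - 1) = (m - 1) * ((s.card - 1) + 1) := by ring
          _ = (m - 1) * s.card := by rw [← h1]
      omega
    · push_neg at hA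
      have hB : ∀ v ∈ s, m ≤ 2 * degIn G s v := fun v hv => by
        have := hA v hv; omega
      rcases Finset.eq_empty_or_nonempty s with rfl | ⟨v₀, hv₀⟩
      · simp [Dsum]
      · classical
        set S := s.filter (fun u => (restrict G s).Reachable v₀ u) with hSdef
        have hSs : S ⊆ s := Finset.filter_subset _ _
        have hv₀S : v₀ ∈ S := by
          rw [hSdef, Finset.mem_filter]
          exact ⟨hv₀, SimpleGraph.Reachable.refl _⟩
        have hclosed : ∀ u ∈ S, ∀ w ∈ s, G.Adj u w → w ∈ S := by
          intro u hu w hw hadj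
          rw [hSdef, Finset.mem_filter] at hu ⊢
          exact ⟨hw, hu.2.trans (SimpleGraph.Adj.reachable
            (restrict_adj.2 ⟨hadj, hu.1, hw⟩))⟩
        have hdegS : ∀ v ∈ S, degIn G S v = degIn G s v := fun v hv =>
          (degIn_congr hSs hv (hclosed v hv)).symm
        have hconn : ∀ u ∈ S, (restrict G S).Reachable v₀ u := by
          intro u hu
          rw [hSdef, Finset.mem_filter] at hu
          obtain ⟨p⟩ := hu.2
          exact reach_transfer hclosed p hv₀S
        have hScard : S.card ≤ m := by
          refine no_big_component hm hv₀S (fun l hl => hpath l (hl.mono hSs)) hconn ?_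
          intro v hv
          rw [hdegS v hv]
          exact hB v (hSs hv)
        have hsplit : Dsum G s = Dsum G S + Dsum G (s \ S) := Dsum_split hSs hclosed
        have hDS : Dsum G S ≤ (m - 1) * S.card := Dsum_le_card (by omega)
        have hDrest : Dsum G (s \ S) ≤ (m - 1) * (s \ S).card := by
          refine ih (s \ S) ?_ fun l hl => hpath l (hl.mono Finset.sdiff_subset)
          exact Finset.sdiff_ssubset hSs ⟨v₀, hv₀S⟩
        have hcards : (s \ S).card = s.card - S.card := Finset.card_sdiff_of_subset hSs
        have hle : S.card ≤ s.card := Finset.card_le_card hSs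
        calc Dsum G s = Dsum G S + Dsum G (s \ S) := hsplit
          _ ≤ (m - 1) * S.card + (m - 1) * (s \ S).card := by omega
          _ = (m - 1) * (S.card + (s \ S).card) := by rw [Nat.mul_add]
          _ = (m - 1) * s.card := by rw [hcards]; congr 1; omega

lemma nbr_path_short {k : ℕ} (hk : 2 ≤ k)
    (hfree : ¬ ∃ f : SimpleGraph.cycleGraph (2 * k + 1) →g G, Function.Injective ⇑f)
    (v : Fin n) : ∀ l, IsPathIn G (G.neighborFinset v) l → l.length ≤ 2 * k - 1 := by
  intro l hl
  by_contra hlen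
  push_neg at hlen
  have h2k : 2 * k ≤ l.length := by omega
  set l' := l.take (2 * k) with hl'def
  have hlen' : l'.length = 2 * k := by rw [hl'def, List.length_take]; omega
  have hch' : l'.IsChain G.Adj := hl.1.take _
  have hnd' : l'.Nodup := (List.take_sublist _ _).nodup hl.2.1
  have hmem' : ∀ x ∈ l', x ∈ G.neighborFinset v := fun x hx =>
    hl.2.2 x (List.mem_of_mem_take hx)
  have hl'ne : l' ≠ [] := by
    intro h; rw [h] at hlen'; simp at hlen'; omega
  have hcne : (v :: l') ≠ [] := List.cons_ne_nil _ _
  have hclen : (v :: l').length = 2 * k + 1 := by rw [List.length_cons, hlen']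
  have hchc : (v :: l').IsChain G.Adj := by
    rw [List.isChain_cons]
    refine ⟨?_, hch'⟩
    intro y hy
    rw [List.head?_eq_head hl'ne, Option.mem_some_iff] at hy
    rw [← hy]
    exact (G.mem_neighborFinset v _).1 (hmem' _ (List.head_mem hl'ne))
  have hnodc : (v :: l').Nodup := by
    rw [List.nodup_cons]
    refine ⟨?_, hnd'⟩
    intro hvl
    exact G.irrefl ((G.mem_neighborFinset v v).1 (hmem' v hvl))
  have hwrap : G.Adj ((v :: l').getLast hcne) ((v :: l').head hcne) := by
    rw [List.head_cons, List.getLast_cons hl'ne]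
    exact ((G.mem_neighborFinset v _).1 (hmem' _ (List.getLast_mem hl'ne))).symm
  exact hfree (cycle_hom (by omega) hcne hclen hchc hnodc hwrap)

end EGaux

set_option maxHeartbeats 2000000 in
theorem stmt_3 (n k : ℕ) (hk : 2 ≤ k) (G : SimpleGraph (Fin n))
    (hfree : ¬ ∃ f : SimpleGraph.cycleGraph (2 * k + 1) →g G, Function.Injective f) :
    3 * (G.cliqueSet 3).ncard ≤ 2 * (k - 1) * G.edgeSet.ncard := by
  classical
  open EGaux in
  rw [← SimpleGraph.coe_cliqueFinset, Set.ncard_coe_finset,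
    ← SimpleGraph.coe_edgeFinset, Set.ncard_coe_finset]
  set T3 := Finset.univ.filter (fun x : Fin n × Fin n × Fin n =>
    G.Adj x.1 x.2.1 ∧ G.Adj x.1 x.2.2 ∧ G.Adj x.2.1 x.2.2) with hT3
  -- Claim 1 : T3.card = sum over v of Dsum of neighborhoods
  have hc1 : T3.card = ∑ v : Fin n, EGaux.Dsum G (G.neighborFinset v) := by
    rw [hT3, Finset.card_filter, ← Finset.univ_product_univ, Finset.sum_product]
    refine Finset.sum_congr rfl fun v _ => ?_
    rw [← Finset.univ_product_univ, Finset.sum_product]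
    simp only [EGaux.Dsum, EGaux.degIn]
    rw [SimpleGraph.neighborFinset_eq_filter, Finset.sum_filter]
    refine Finset.sum_congr rfl fun u _ => ?_
    by_cases hvu : G.Adj v u
    · rw [if_pos hvu, Finset.filter_filter, Finset.card_filter]
      refine Finset.sum_congr rfl fun w _ => ?_
      show (if G.Adj v u ∧ G.Adj v w ∧ G.Adj u w then 1 else 0)
          = (if G.Adj v w ∧ G.Adj u w then 1 else 0)
      by_cases h1 : G.Adj v w ∧ G.Adj u w
      · rw [if_pos h1, if_pos ⟨hvu, h1⟩]
      · rw [if_neg h1, if_neg (fun hh => h1 hh.2)]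
    · rw [if_neg hvu]
      exact Finset.sum_eq_zero fun w _ => by simp [hvu]
  -- Claim 2 : T3.card = 6 * number of triangles
  have hmap : ∀ x ∈ T3, ({x.1, x.2.1, x.2.2} : Finset (Fin n)) ∈ G.cliqueFinset 3 := by
    intro x hx
    rw [hT3, Finset.mem_filter] at hx
    rw [SimpleGraph.mem_cliqueFinset_iff, SimpleGraph.is3Clique_triple_iff]
    exact hx.2
  have hfiber : ∀ t ∈ G.cliqueFinset 3,
      (T3.filter (fun x => ({x.1, x.2.1, x.2.2} : Finset (Fin n)) = t)).card = 6 := by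
    intro t ht
    rw [SimpleGraph.mem_cliqueFinset_iff] at ht
    have hcard := ht.card_eq
    obtain ⟨x, y, z, hxy, hxz, hyz, rfl⟩ := Finset.card_eq_three.1 hcard
    obtain ⟨haxy, haxz, hayz⟩ := SimpleGraph.is3Clique_triple_iff.1 ht
    have e1 : ({x, z, y} : Finset (Fin n)) = {x, y, z} := by ext w; simp; tauto
    have e2 : ({y, x, z} : Finset (Fin n)) = {x, y, z} := by ext w; simp; tauto
    have e3 : ({y, z, x} : Finset (Fin n)) = {x, y, z} := by ext w; simp; tauto
    have e4 : ({z, x, y} : Finset (Fin n)) = {x, y, z} := by ext w; simp; tauto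
    have e5 : ({z, y, x} : Finset (Fin n)) = {x, y, z} := by ext w; simp; tauto
    have hset : T3.filter (fun a => ({a.1, a.2.1, a.2.2} : Finset (Fin n)) = {x, y, z}) =
        ({(x,y,z),(x,z,y),(y,x,z),(y,z,x),(z,x,y),(z,y,x)} :
          Finset (Fin n × Fin n × Fin n)) := by
      ext ⟨a, b, c⟩
      simp only [Finset.mem_filter, hT3, Finset.mem_univ, true_and, Finset.mem_insert,
        Finset.mem_singleton, Prod.mk.injEq]
      constructor
      · rintro ⟨⟨hab, hac, hbc⟩, hs⟩
        have ha : a = x ∨ a = y ∨ a = z := by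
          have h' : a ∈ ({x, y, z} : Finset (Fin n)) := by rw [← hs]; simp
          simpa using h'
        have hb : b = x ∨ b = y ∨ b = z := by
          have h' : b ∈ ({x, y, z} : Finset (Fin n)) := by rw [← hs]; simp
          simpa using h'
        have hc : c = x ∨ c = y ∨ c = z := by
          have h' : c ∈ ({x, y, z} : Finset (Fin n)) := by rw [← hs]; simp
          simpa using h'
        rcases ha with rfl | rfl | rfl
        · rcases hb with rfl | rfl | rfl
          · rcases hc with rfl | rfl | rfl
            · exact absurd hab (G.loopless.irrefl _)
            · exact absurd hab (G.loopless.irrefl _)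
            · exact absurd hab (G.loopless.irrefl _)
          · rcases hc with rfl | rfl | rfl
            · exact absurd hac (G.loopless.irrefl _)
            · exact absurd hbc (G.loopless.irrefl _)
            · exact Or.inl ⟨rfl, rfl, rfl⟩
          · rcases hc with rfl | rfl | rfl
            · exact absurd hac (G.loopless.irrefl _)
            · exact Or.inr (Or.inl ⟨rfl, rfl, rfl⟩)
            · exact absurd hbc (G.loopless.irrefl _)
        · rcases hb with rfl | rfl | rfl
          · rcases hc with rfl | rfl | rfl
            · exact absurd hbc (G.loopless.irrefl _)
            · exact absurd hac (G.loopless.irrefl _)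
            · exact Or.inr (Or.inr (Or.inl ⟨rfl, rfl, rfl⟩))
          · rcases hc with rfl | rfl | rfl
            · exact absurd hab (G.loopless.irrefl _)
            · exact absurd hab (G.loopless.irrefl _)
            · exact absurd hab (G.loopless.irrefl _)
          · rcases hc with rfl | rfl | rfl
            · exact Or.inr (Or.inr (Or.inr (Or.inl ⟨rfl, rfl, rfl⟩)))
            · exact absurd hac (G.loopless.irrefl _)
            · exact absurd hbc (G.loopless.irrefl _)
        · rcases hb with rfl | rfl | rfl
          · rcases hc with rfl | rfl | rfl
            · exact absurd hbc (G.loopless.irrefl _)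
            · exact Or.inr (Or.inr (Or.inr (Or.inr (Or.inl ⟨rfl, rfl, rfl⟩))))
            · exact absurd hac (G.loopless.irrefl _)
          · rcases hc with rfl | rfl | rfl
            · exact Or.inr (Or.inr (Or.inr (Or.inr (Or.inr (⟨rfl, rfl, rfl⟩)))))
            · exact absurd hbc (G.loopless.irrefl _)
            · exact absurd hac (G.loopless.irrefl _)
          · rcases hc with rfl | rfl | rfl
            · exact absurd hab (G.loopless.irrefl _)
            · exact absurd hab (G.loopless.irrefl _)
            · exact absurd hab (G.loopless.irrefl _)
      · rintro (⟨rfl, rfl, rfl⟩ | ⟨rfl, rfl, rfl⟩ | ⟨rfl, rfl, rfl⟩ | ⟨rfl, rfl, rfl⟩ |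
          ⟨rfl, rfl, rfl⟩ | ⟨rfl, rfl, rfl⟩)
        · exact ⟨⟨haxy, haxz, hayz⟩, rfl⟩
        · exact ⟨⟨haxz, haxy, hayz.symm⟩, e1⟩
        · exact ⟨⟨haxy.symm, hayz, haxz⟩, e2⟩
        · exact ⟨⟨hayz, haxy.symm, haxz.symm⟩, e3⟩
        · exact ⟨⟨haxz.symm, hayz.symm, haxy⟩, e4⟩
        · exact ⟨⟨hayz.symm, haxz.symm, haxy.symm⟩, e5⟩
    rw [hset]
    rw [Finset.card_insert_of_notMem (by simp [Prod.ext_iff, hxy, hxz, hyz, Ne.symm hxy,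
      Ne.symm hxz, Ne.symm hyz]),
      Finset.card_insert_of_notMem (by simp [Prod.ext_iff, hxy, hxz, hyz, Ne.symm hxy,
      Ne.symm hxz, Ne.symm hyz]),
      Finset.card_insert_of_notMem (by simp [Prod.ext_iff, hxy, hxz, hyz, Ne.symm hxy,
      Ne.symm hxz, Ne.symm hyz]),
      Finset.card_insert_of_notMem (by simp [Prod.ext_iff, hxy, hxz, hyz, Ne.symm hxy,
      Ne.symm hxz, Ne.symm hyz]),
      Finset.card_insert_of_notMem (by simp [Prod.ext_iff, hxy, hxz, hyz, Ne.symm hxy,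
      Ne.symm hxz, Ne.symm hyz]),
      Finset.card_singleton]
  have hc2 : T3.card = 6 * (G.cliqueFinset 3).card := by
    rw [Finset.card_eq_sum_card_fiberwise hmap, Finset.sum_congr rfl hfiber,
      Finset.sum_const, smul_eq_mul, mul_comm]
  -- Claim 3 : Erdos-Gallai bound per vertex
  have hEGv : ∀ v : Fin n, EGaux.Dsum G (G.neighborFinset v)
      ≤ (2 * k - 2) * G.degree v := by
    intro v
    have h1 := EGaux.erdos_gallai (G := G) (m := 2 * k - 1) (by omega)
      (G.neighborFinset v) (EGaux.nbr_path_short hk hfree v)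
    rw [SimpleGraph.card_neighborFinset_eq_degree] at h1
    have h2 : 2 * k - 1 - 1 = 2 * k - 2 := by omega
    rwa [h2] at h1
  have hsum : ∑ v : Fin n, EGaux.Dsum G (G.neighborFinset v)
      ≤ (2 * k - 2) * (2 * G.edgeFinset.card) := by
    calc ∑ v : Fin n, EGaux.Dsum G (G.neighborFinset v)
        ≤ ∑ v : Fin n, (2 * k - 2) * G.degree v :=
          Finset.sum_le_sum fun v _ => hEGv v
      _ = (2 * k - 2) * ∑ v : Fin n, G.degree v := (Finset.mul_sum _ _ _).symm
      _ = (2 * k - 2) * (2 * G.edgeFinset.card) := by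
          rw [SimpleGraph.sum_degrees_eq_twice_card_edges]
  have h6 : 6 * (G.cliqueFinset 3).card ≤ (2 * k - 2) * (2 * G.edgeFinset.card) := by
    rw [← hc2, hc1]; exact hsum
  have h3 : 3 * (G.cliqueFinset 3).card ≤ (2 * k - 2) * G.edgeFinset.card := by
    refine Nat.le_of_mul_le_mul_left ?_ (by norm_num : (0:ℕ) < 2)
    calc 2 * (3 * (G.cliqueFinset 3).card) = 6 * (G.cliqueFinset 3).card := by ring
      _ ≤ (2 * k - 2) * (2 * G.edgeFinset.card) := h6
      _ = 2 * ((2 * k - 2) * G.edgeFinset.card) := by ring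
  have h2 : 2 * k - 2 = 2 * (k - 1) := by omega
  rwa [h2] at h3
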